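/- Let c > 0 and 0 < δ < c/100, and let ξ ∈ ℂ satisfy Re(ξ) ≥ c − δ and 0 ≤ Im(ξ) ≤ δ. Then |ℓ_c(ξ)| ≤ c·e^{1.56√(δc)}/sinh(c). -/

import Mathlib

open scoped BigOperators

/-- The entire function `w ↦ sin(√w)/√w = ∑ (-1)ⁿ wⁿ/(2n+1)!`. -/
noncomputable def sincSqrt (w : ℂ) : ℂ :=
  ∑' n : ℕ, (-1) ^ n * w ^ n / ((2 * n + 1).factorial : ℂ)

/-- The Logan function `ℓ_c(z) = (c/sinh c)·sin(√(z²-c²))/√(z²-c²)`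
(entire extension). -/
noncomputable def loganEll (c : ℝ) (z : ℂ) : ℂ :=
  (c / Real.sinh c) * sincSqrt (z ^ 2 - (c : ℂ) ^ 2)

lemma sincSqrt_zero : sincSqrt 0 = 1 := by
  unfold sincSqrt
  rw [tsum_eq_single 0 (by intro n hn; simp [zero_pow hn])]
  simp

lemma sincSqrt_sq (u : ℂ) (hu : u ≠ 0) : sincSqrt (u ^ 2) = Complex.sin u / u := by
  have h := (Complex.hasSum_sin u).div_const u
  have h2 : HasSum (fun n : ℕ => (-1) ^ n * (u ^ 2) ^ n / ((2 * n + 1).factorial : ℂ))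
      (Complex.sin u / u) := by
    refine h.congr_fun fun n => ?_
    have hf : ((2 * n + 1).factorial : ℂ) ≠ 0 := Nat.cast_ne_zero.mpr (Nat.factorial_ne_zero _)
    rw [eq_div_iff hu, ← pow_mul]
    field_simp
    ring
  exact h2.tsum_eq

lemma abs_sin_le (u : ℂ) :
    ‖Complex.sin u‖ ≤ Real.exp |u.im| * ‖u‖ := by
  set a := u.re with ha
  set b := u.im with hb
  have hsin : Complex.sin u = Complex.ofReal (Real.sin a * Real.cosh b) +
      Complex.ofReal (Real.cos a * Real.sinh b) * Complex.I := by
    rw [Complex.sin_eq]; push_cast; ring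
  have habs2 : (‖Complex.sin u‖) ^ 2 = Real.sin a ^ 2 + Real.sinh b ^ 2 := by
    have hgen : ∀ p q : ℝ, (‖(p : ℂ) + (q : ℂ) * Complex.I‖) ^ 2 = p ^ 2 + q ^ 2 := by
      intro p q
      rw [Complex.sq_norm, Complex.normSq_add_mul_I]
    rw [hsin, hgen]
    have h1 : Real.cosh b ^ 2 = Real.sinh b ^ 2 + 1 := Real.cosh_sq b
    have h2 := Real.sin_sq_add_cos_sq a
    linear_combination Real.sin a ^ 2 * h1 + Real.sinh b ^ 2 * h2
  have hsin2 : Real.sin a ^ 2 ≤ a ^ 2 := by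
    have key : ∀ t : ℝ, 0 ≤ t → Real.sin t ^ 2 ≤ t ^ 2 := by
      intro t ht
      have h1 : Real.sin t ≤ t := Real.sin_le ht
      have h2 : -t ≤ Real.sin t := by
        rcases le_or_gt t Real.pi with h | h
        · linarith [Real.sin_nonneg_of_nonneg_of_le_pi ht h]
        · linarith [Real.neg_one_le_sin t, Real.pi_gt_three]
      nlinarith
    rcases le_or_gt 0 a with h | h
    · exact key a h
    · have h' := key (-a) (by linarith)
      rw [Real.sin_neg] at h'
      nlinarith
  set E := Real.exp |b| with hE
  have hE1 : 1 ≤ E := Real.one_le_exp (abs_nonneg b)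
  have hEinv : Real.exp (-|b|) = E⁻¹ := Real.exp_neg _
  have hsinh : Real.sinh b ^ 2 ≤ b ^ 2 * E ^ 2 := by
    have h1 : Real.sinh b ^ 2 = Real.sinh |b| ^ 2 := by
      rcases abs_cases b with ⟨h, _⟩ | ⟨h, _⟩ <;> rw [h] <;> simp [Real.sinh_neg]
    have h2 : Real.sinh |b| = (E - E⁻¹) / 2 := by
      rw [Real.sinh_eq, hEinv]
    have h3 : 1 - 2 * |b| ≤ (E ^ 2)⁻¹ := by
      have h3' := Real.add_one_le_exp (-(2 * |b|))
      have heq : Real.exp (-(2 * |b|)) = (E ^ 2)⁻¹ := by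
        rw [Real.exp_neg, two_mul, Real.exp_add, ← hE, sq]
      rw [heq] at h3'
      linarith
    have hEpos : (0:ℝ) < E := lt_of_lt_of_le one_pos hE1
    have hmul : E⁻¹ * E = 1 := inv_mul_cancel₀ (ne_of_gt hEpos)
    have h4 : E - E⁻¹ ≤ 2 * |b| * E := by
      have : (E ^ 2)⁻¹ = E⁻¹ * E⁻¹ := by rw [sq, mul_inv]
      nlinarith [sq_nonneg (E - E⁻¹), abs_nonneg b]
    have h5 : 0 ≤ E - E⁻¹ := by
      have : E⁻¹ ≤ 1 := inv_le_one_of_one_le₀ hE1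
      linarith
    rw [h1, h2]
    have habs : |b| ^ 2 = b ^ 2 := sq_abs b
    nlinarith [abs_nonneg b, hEpos]
  have husq : (‖u‖) ^ 2 = a ^ 2 + b ^ 2 := by
    rw [Complex.sq_norm, Complex.normSq_apply]; ring
  have hfinal : (‖Complex.sin u‖) ^ 2 ≤ (E * ‖u‖) ^ 2 := by
    have heq : (E * ‖u‖) ^ 2 = E ^ 2 * (a ^ 2 + b ^ 2) := by rw [mul_pow, husq]
    have hE2 : 1 ≤ E ^ 2 := by nlinarith
    rw [heq, habs2]
    nlinarith [sq_nonneg a, sq_nonneg b, hE2, hsin2, hsinh]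
  have h0 : 0 ≤ ‖Complex.sin u‖ := norm_nonneg _
  have h0' : 0 ≤ E * ‖u‖ :=
    mul_nonneg (le_of_lt (lt_of_lt_of_le one_pos hE1)) (norm_nonneg _)
  nlinarith [hfinal, h0, h0', sq_nonneg (‖Complex.sin u‖ + E * ‖u‖)]

lemma abs_sincSqrt_le (u : ℂ) :
    ‖sincSqrt (u ^ 2)‖ ≤ Real.exp |u.im| := by
  rcases eq_or_ne u 0 with rfl | hu
  · simp [sincSqrt_zero, Real.one_le_exp (abs_nonneg _)]
  · rw [sincSqrt_sq u hu, norm_div]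
    rw [div_le_iff₀ (by simpa using hu)]
    exact abs_sin_le u

lemma exists_sqrt_im (w : ℂ) (hw : 0 ≤ w.im) :
    ∃ u : ℂ, u ^ 2 = w ∧ u.im = Real.sqrt ((‖w‖ - w.re) / 2) := by
  have hre : |w.re| ≤ ‖w‖ := Complex.abs_re_le_norm w
  obtain ⟨hre1, hre2⟩ := abs_le.mp hre
  have h1 : 0 ≤ (‖w‖ + w.re) / 2 := by linarith
  have h2 : 0 ≤ (‖w‖ - w.re) / 2 := by linarith
  set A := Real.sqrt ((‖w‖ + w.re) / 2) with hA'
  set B := Real.sqrt ((‖w‖ - w.re) / 2) with hB'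
  have hA : A * A = (‖w‖ + w.re) / 2 := Real.mul_self_sqrt h1
  have hB : B * B = (‖w‖ - w.re) / 2 := Real.mul_self_sqrt h2
  have hsq : ‖w‖ ^ 2 = w.re ^ 2 + w.im ^ 2 := by
    rw [Complex.sq_norm, Complex.normSq_apply]; ring
  have hAB : A * B = w.im / 2 := by
    rw [hA', hB', ← Real.sqrt_mul h1]
    have : (‖w‖ + w.re) / 2 * ((‖w‖ - w.re) / 2) = (w.im / 2) ^ 2 := by
      linear_combination hsq / 4
    rw [this, Real.sqrt_sq (by linarith)]
  refine ⟨(A : ℂ) + (B : ℂ) * Complex.I, ?_, by simp⟩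
  apply Complex.ext
  · simp only [pow_two, Complex.mul_re, Complex.add_re, Complex.add_im, Complex.ofReal_re,
      Complex.ofReal_im, Complex.mul_re, Complex.mul_im, Complex.I_re, Complex.I_im]
    ring_nf
    nlinarith [hA, hB]
  · simp only [pow_two, Complex.mul_im, Complex.add_re, Complex.add_im, Complex.ofReal_re,
      Complex.ofReal_im, Complex.mul_re, Complex.mul_im, Complex.I_re, Complex.I_im]
    ring_nf
    nlinarith [hAB]

set_option maxHeartbeats 1000000 in
theorem loganEll_bound
    (c δ : ℝ) (ξ : ℂ)
    (hc : 0 < c) (hδ0 : 0 < δ) (hδ : δ < c / 100)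
    (hre : c - δ ≤ ξ.re) (him0 : 0 ≤ ξ.im) (him : ξ.im ≤ δ) :
    ‖loganEll c ξ‖ ≤ c * Real.exp (1.56 * Real.sqrt (δ * c)) / Real.sinh c := by
  set x := ξ.re with hx
  set y := ξ.im with hy
  set w : ℂ := ξ ^ 2 - (c : ℂ) ^ 2 with hw
  have hwre : w.re = x ^ 2 - y ^ 2 - c ^ 2 := by
    simp [hw, pow_two, Complex.sub_re, Complex.mul_re, ← hx, ← hy]
    try ring
  have hwim : w.im = 2 * (x * y) := by
    simp [hw, pow_two, Complex.sub_im, Complex.mul_im, ← hx, ← hy]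
    try ring
  have hxpos : 0 < x := lt_of_lt_of_le (by linarith) hre
  have hwim0 : 0 ≤ w.im := by rw [hwim]; positivity
  obtain ⟨u, hu2, huim⟩ := exists_sqrt_im w hwim0
  have hx2 : (c - δ) ^ 2 ≤ x ^ 2 := by nlinarith
  have hy2 : y ^ 2 ≤ δ ^ 2 := by nlinarith
  -- key estimate : abs w ≤ w.re + 2 * (1.56^2 * (δ*c))
  have hkey : x ^ 2 * y ^ 2 ≤ 1.56 ^ 2 * (δ * c) * (x ^ 2 - y ^ 2 - c ^ 2)
      + (1.56 ^ 2) ^ 2 * (δ * c) ^ 2 := by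
    have h0 : (0:ℝ) ≤ 1.56 ^ 2 * (δ * c) - δ ^ 2 := by nlinarith
    have hKy : (0:ℝ) ≤ 1.56 ^ 2 * (δ * c) - y ^ 2 := by nlinarith
    have p1 : (1.56 ^ 2 * (δ * c) - y ^ 2) * (c - δ) ^ 2 ≤ (1.56 ^ 2 * (δ * c) - y ^ 2) * x ^ 2 :=
      mul_le_mul_of_nonneg_left hx2 hKy
    have p2 : (1.56 ^ 2 * (δ * c) - δ ^ 2) * (c - δ) ^ 2 ≤
        (1.56 ^ 2 * (δ * c) - y ^ 2) * (c - δ) ^ 2 :=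
      mul_le_mul_of_nonneg_right (by linarith) (sq_nonneg _)
    have p3 : 1.56 ^ 2 * (δ * c) * y ^ 2 ≤ 1.56 ^ 2 * (δ * c) * δ ^ 2 :=
      mul_le_mul_of_nonneg_left hy2 (by positivity)
    have hG : (0:ℝ) ≤ (1.56 ^ 2 * (δ * c) - δ ^ 2) * (c - δ) ^ 2
        - 1.56 ^ 2 * (δ * c) * δ ^ 2 - 1.56 ^ 2 * (δ * c) * c ^ 2 + (1.56 ^ 2) ^ 2 * (δ * c) ^ 2 := by
      have hpos : (0:ℝ) ≤ 0.05520896 * c ^ 2 + 2 * δ * c - δ ^ 2 := by nlinarith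
      nlinarith [mul_nonneg (sq_nonneg δ) hpos]
    linarith [p1, p2, p3, hG]
  have habs : ‖w‖ ≤ w.re + 2 * (1.56 ^ 2 * (δ * c)) := by
    have h1 : ‖w‖ = Real.sqrt (w.re ^ 2 + w.im ^ 2) := by
      rw [Complex.norm_def, Complex.normSq_apply]; ring_nf
    have hpos : 0 ≤ w.re + 2 * (1.56 ^ 2 * (δ * c)) := by
      rw [hwre]; nlinarith [hx2, hy2, mul_pos hδ0 hc]
    have hineq : w.re ^ 2 + w.im ^ 2 ≤ (w.re + 2 * (1.56 ^ 2 * (δ * c))) ^ 2 := by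
      rw [hwre, hwim]
      have hpos2 : 0 ≤ x ^ 2 - y ^ 2 - c ^ 2 + 2 * (1.56 ^ 2 * (δ * c)) := by
        nlinarith [hx2, hy2, mul_pos hδ0 hc]
      nlinarith [hkey, hpos2]
    calc ‖w‖ = Real.sqrt (w.re ^ 2 + w.im ^ 2) := h1
      _ ≤ Real.sqrt ((w.re + 2 * (1.56 ^ 2 * (δ * c))) ^ 2) := Real.sqrt_le_sqrt hineq
      _ = w.re + 2 * (1.56 ^ 2 * (δ * c)) := Real.sqrt_sq hpos
  have huim_le : u.im ≤ 1.56 * Real.sqrt (δ * c) := by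
    rw [huim]
    have h1 : (‖w‖ - w.re) / 2 ≤ 1.56 ^ 2 * (δ * c) := by linarith
    calc Real.sqrt ((‖w‖ - w.re) / 2) ≤ Real.sqrt (1.56 ^ 2 * (δ * c)) :=
          Real.sqrt_le_sqrt h1
      _ = 1.56 * Real.sqrt (δ * c) := by
          rw [Real.sqrt_mul (sq_nonneg _), Real.sqrt_sq (by norm_num)]
  have huim0 : 0 ≤ u.im := by rw [huim]; exact Real.sqrt_nonneg _
  have hsinc : ‖sincSqrt w‖ ≤ Real.exp (1.56 * Real.sqrt (δ * c)) := by
    calc ‖sincSqrt w‖ = ‖sincSqrt (u ^ 2)‖ := by rw [hu2]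
      _ ≤ Real.exp |u.im| := abs_sincSqrt_le u
      _ ≤ Real.exp (1.56 * Real.sqrt (δ * c)) := by
          apply Real.exp_le_exp.mpr
          rwa [abs_of_nonneg huim0]
  have hsinh : 0 < Real.sinh c := Real.sinh_pos_iff.mpr hc
  calc ‖loganEll c ξ‖
      = (c / Real.sinh c) * ‖sincSqrt w‖ := by
        rw [loganEll, norm_mul, ← hw, norm_div, Complex.norm_of_nonneg hc.le,
          Complex.norm_of_nonneg hsinh.le]
    _ ≤ (c / Real.sinh c) * Real.exp (1.56 * Real.sqrt (δ * c)) := by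
        apply mul_le_mul_of_nonneg_left hsinc (by positivity)
    _ = c * Real.exp (1.56 * Real.sqrt (δ * c)) / Real.sinh c := by ring
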